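/- There exists η > 0 such that: if b is a real traceless 2×2 matrix with ‖b − [[0,1],[-1,0]]‖ ≤ η, a is a complex traceless 2×2 matrix with ‖a‖ ≤ η, z ∈ ℂ satisfies |z| ≤ 1, Im z > 0, and |Im((1-z²)aᵢⱼ)| ≤ C·η·Im z for all entries (which holds when z ∈ ∂D ∩ H or z = (√2-1)i and ‖a‖ ≤ η), and m ∈ ℝ, then Im[z(2b₁m + b₂ − b₃m²) + (1−z²)(2a₁m + a₂ − a₃m²)] > 0. -/

import Mathlib

/-- There exists `η > 0` such that: if `b = [[b₁,b₂],[b₃,-b₁]]` is a real traceless matrix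
`η`-close to the rotation generator `[[0,1],[-1,0]]`, `a = [[a₁,a₂],[a₃,-a₁]]` is a complex
traceless matrix with `‖a‖ ≤ η`, `z ∈ ℂ` satisfies `|z| ≤ 1`, `Im z > 0` and
`|Im((1-z²)aᵢ)| ≤ C·η·Im z` for all entries, and `m ∈ ℝ`, then
`Im[z(2b₁m + b₂ − b₃m²) + (1−z²)(2a₁m + a₂ − a₃m²)] > 0`. -/
theorem stmt8 (C : ℝ) (hC : 0 < C) :
    ∃ η > (0 : ℝ), ∀ (b₁ b₂ b₃ : ℝ) (a₁ a₂ a₃ z : ℂ) (m : ℝ),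
      |b₁| ≤ η → |b₂ - 1| ≤ η → |b₃ + 1| ≤ η →
      ‖a₁‖ ≤ η → ‖a₂‖ ≤ η → ‖a₃‖ ≤ η →
      ‖z‖ ≤ 1 → 0 < z.im →
      |(((1 : ℂ) - z ^ 2) * a₁).im| ≤ C * η * z.im →
      |(((1 : ℂ) - z ^ 2) * a₂).im| ≤ C * η * z.im →
      |(((1 : ℂ) - z ^ 2) * a₃).im| ≤ C * η * z.im →
      0 < (z * (2 * (b₁ : ℂ) * (m : ℂ) + (b₂ : ℂ) - (b₃ : ℂ) * (m : ℂ) ^ 2) +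
        (1 - z ^ 2) * (2 * a₁ * (m : ℂ) + a₂ - a₃ * (m : ℂ) ^ 2)).im := by
  refine ⟨1 / (4 * (1 + C)), by positivity, ?_⟩
  intro b₁ b₂ b₃ a₁ a₂ a₃ z m hb₁ hb₂ hb₃ _ _ _ _ him h1 h2 h3
  set η : ℝ := 1 / (4 * (1 + C)) with hη
  have hηpos : 0 < η := by positivity
  have hηC : η * (1 + C) = 1 / 4 := by
    rw [hη]; field_simp
  set u₁ := (((1 : ℂ) - z ^ 2) * a₁).im with hu₁
  set u₂ := (((1 : ℂ) - z ^ 2) * a₂).im with hu₂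
  set u₃ := (((1 : ℂ) - z ^ 2) * a₃).im with hu₃
  have hsplit : (z * (2 * (b₁ : ℂ) * (m : ℂ) + (b₂ : ℂ) - (b₃ : ℂ) * (m : ℂ) ^ 2) +
      (1 - z ^ 2) * (2 * a₁ * (m : ℂ) + a₂ - a₃ * (m : ℂ) ^ 2)).im
      = z.im * (2 * b₁ * m + b₂ - b₃ * m ^ 2) + (2 * m * u₁ + u₂ - m ^ 2 * u₃) := by
    rw [hu₁, hu₂, hu₃]
    simp [pow_two, Complex.add_im, Complex.sub_im, Complex.mul_im, Complex.mul_re,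
      Complex.ofReal_im, Complex.ofReal_re, Complex.sub_re, Complex.one_re,
      Complex.one_im]
    ring
  rw [hsplit]
  rw [abs_le] at hb₁ hb₂ hb₃ h1 h2 h3
  nlinarith [sq_nonneg (1 - m), sq_nonneg (1 + m), sq_nonneg m, him, hηpos,
    mul_pos him hηpos, mul_pos hC hηpos,
    mul_le_mul_of_nonneg_left hb₁.1 him.le, mul_le_mul_of_nonneg_left hb₂.1 him.le,
    mul_le_mul_of_nonneg_left hb₃.2 him.le,
    mul_le_mul_of_nonneg_left hb₁.2 him.le,
    mul_nonneg him.le (sq_nonneg m),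
    mul_nonneg (mul_nonneg him.le hηpos.le) (sq_nonneg (1 - m)),
    mul_nonneg (mul_nonneg him.le hηpos.le) (sq_nonneg (1 + m)),
    mul_nonneg (mul_nonneg (mul_nonneg hC.le him.le) hηpos.le) (sq_nonneg (1 - m)),
    mul_nonneg (mul_nonneg (mul_nonneg hC.le him.le) hηpos.le) (sq_nonneg (1 + m)),
    mul_le_mul_of_nonneg_left h1.1 (le_of_lt (by positivity : (0:ℝ) < 2)),
    h2.1, mul_le_mul_of_nonneg_left h3.2 (sq_nonneg m)]
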